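/- For any positive integer n and real number a with a+1+n ≠ 0 for the relevant indices, (a+2)^2 * S_n(a+2) - (a+1)^2 * S_n(a) = (a+2)(2a+3) * n/(4^{n-1}(a+1+n)) * C(2n-1,n-1)*C(a+1,n-1)*C(-3-a,n-1), where S_n(a) = Σ_{k=0}^{n-1} C(a,k)*C(-1-a,k)*C(2k,k)/4^k. -/

import Mathlib

/-- Generalized binomial coefficient `C(x, k) = x(x-1)⋯(x-k+1)/k!` for real `x`. -/
noncomputable def gbc (x : ℝ) (k : ℕ) : ℝ :=
  (∏ i ∈ Finset.range k, (x - i)) / (Nat.factorial k)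

/-- `S_n(a) = Σ_{k=0}^{n-1} C(a,k) C(-1-a,k) C(2k,k) / 4^k`. -/
noncomputable def S (a : ℝ) (n : ℕ) : ℝ :=
  ∑ k ∈ Finset.range n, gbc a k * gbc (-1 - a) k * (Nat.choose (2 * k) k) / 4 ^ k

noncomputable def P (x : ℝ) (k : ℕ) : ℝ := ∏ i ∈ Finset.range k, (x - i)

lemma P_succ (x : ℝ) (k : ℕ) : P x (k+1) = P x k * (x - k) := Finset.prod_range_succ _ _

lemma P_shift (x : ℝ) (k : ℕ) : P (x+1) (k+1) = (x+1) * P x k := by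
  unfold P
  rw [Finset.prod_range_succ']
  push_cast
  rw [mul_comm]
  congr 1
  · norm_num
  · apply Finset.prod_congr rfl
    intro i _
    ring

lemma ch1 (j : ℕ) : (2*j+4).choose (j+2) = 2 * (2*j+3).choose (j+1) := by
  have h : (2*j+4).choose (j+2) = (2*j+3).choose (j+1) + (2*j+3).choose (j+2) :=
    Nat.choose_succ_succ (2*j+3) (j+1)
  have hs : (2*j+3).choose (j+1) = (2*j+3).choose (j+2) := by
    have h2 := Nat.choose_symm (show j+2 ≤ 2*j+3 by omega)
    have e : 2*j+3-(j+2) = j+1 := by omega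
    rw [e] at h2
    exact h2
  omega

lemma ch2 (j : ℕ) : (j+3) * (2*j+5).choose (j+2) = 2*(2*j+5) * (2*j+3).choose (j+1) := by
  have h1 := Nat.add_one_mul_choose_eq (2*j+4) (j+1)
  have h2 := Nat.choose_succ_right_eq (2*j+4) (j+1)
  have e : 2*j+4 - (j+1) = j+3 := by omega
  rw [e] at h2
  have h3 := ch1 j
  apply Nat.eq_of_mul_eq_mul_left (show 0 < j+2 by omega)
  calc (j+2) * ((j+3) * (2*j+5).choose (j+2))
      = (j+3) * ((2*j+5).choose (j+2) * (j+2)) := by ring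
    _ = (j+3) * (Nat.succ (2*j+4) * (2*j+4).choose (j+1)) := by rw [← h1]
    _ = (2*j+5) * ((2*j+4).choose (j+1) * (j+3)) := by rw [Nat.succ_eq_add_one]; ring
    _ = (2*j+5) * ((2*j+4).choose (j+2) * (j+2)) := by rw [h2]
    _ = (2*j+5) * (2 * (2*j+3).choose (j+1) * (j+2)) := by rw [h3]
    _ = (j+2) * (2*(2*j+5) * (2*j+3).choose (j+1)) := by ring

lemma gbc_eq (x : ℝ) (k : ℕ) : gbc x k = P x k / (Nat.factorial k) := rfl

noncomputable def W (a : ℝ) : ℕ → ℝ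
  | 0 => 1
  | 1 => 1
  | (j+2) => -(a+2) * P (-3-a) j / (Nat.factorial (j+1))

lemma S_succ (x : ℝ) (n : ℕ) :
    S x (n+1) = S x n + gbc x n * gbc (-1 - x) n * (Nat.choose (2 * n) n) / 4 ^ n :=
  Finset.sum_range_succ _ _

set_option maxHeartbeats 2000000 in
lemma key (a : ℝ) : ∀ n : ℕ, 0 < n →
    (a+2)^2 * S (a+2) n - (a+1)^2 * S a n =
      (2*a+3) * n * ((2*n-1).choose (n-1)) / 4^(n-1) * gbc (a+1) (n-1) * W a n := by
  intro n hn
  induction n, hn using Nat.le_induction with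
  | base =>
    simp [S, gbc, W, Finset.sum_range_one]
    ring
  | succ n hn ih =>
    rw [S_succ, S_succ, mul_add, mul_add]
    have expand : ∀ A B C D : ℝ, (A + B) - (C + D) = (A - C) + (B - D) := by intros; ring
    rw [expand, ih]
    -- now reduce to the step identity
    match n, hn with
    | 1, _ =>
      norm_num [W, gbc, S, P, Finset.prod_range_succ, Finset.prod_range_one,
        Finset.prod_range_zero]
      ring
    | (j+2), _ =>
      have F0 : ((Nat.factorial (j+1) : ℝ)) ≠ 0 := by positivity
      have F2 : ((j:ℝ)+2) ≠ 0 := by positivity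
      have F3 : ((j:ℝ)+3) ≠ 0 := by positivity
      have Q0 : ((4:ℝ)^(j+1)) ≠ 0 := by positivity
      have fact2 : ((Nat.factorial (j+2) : ℝ)) = ((j:ℝ)+2) * (Nat.factorial (j+1)) := by
        rw [Nat.factorial_succ]; push_cast; ring
      -- product facts
      have PA1 : P a (j+1) = P a j * (a - j) := P_succ a j
      have PA2 : P a (j+2) = P a j * (a - j) * (a - j - 1) := by
        rw [P_succ, PA1]; push_cast; ring
      have PB : P (a+1) (j+1) = (a+1) * P a j := P_shift a j
      have PB2 : P (a+1) (j+2) = (a+1) * (P a j * (a - j)) := by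
        rw [P_shift a (j+1), PA1]
      have PC : P (a+2) (j+2) = (a+2) * ((a+1) * P a j) := by
        have := P_shift (a+1) (j+1)
        rw [show a+1+1 = a+2 by ring] at this
        rw [this, PB]
      have PD : P (-3-a) (j+1) = P (-3-a) j * (-3-a-j) := P_succ _ j
      have PE : P (-1-a) (j+2) = (a+1) * ((a+2) * P (-3-a) j) := by
        have h1 := P_shift (-2-a) (j+1)
        have h2 := P_shift (-3-a) j
        rw [show (-2-a)+1 = -1-a by ring] at h1
        rw [show (-3-a)+1 = -2-a by ring] at h2
        rw [h1, h2]; ring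
      have PF : P (-1-(a+2)) (j+2) = P (-3-a) j * (-3-a-j) * (-4-a-j) := by
        rw [show (-1-(a+2)) = (-3-a) by ring, P_succ, PD]; push_cast; ring
      -- choose facts, cast
      have e9 : ((2*(j+2)).choose (j+2) : ℝ) = 2 * ((2*j+3).choose (j+1) : ℝ) := by
        rw [show 2*(j+2) = 2*j+4 by ring, ch1]; push_cast; ring
      have e10 : ((j:ℝ)+3) * ((2*(j+3)-1).choose (j+2) : ℝ)
          = 2*(2*(j:ℝ)+5) * ((2*j+3).choose (j+1) : ℝ) := by
        have := ch2 j
        rw [show 2*(j+3)-1 = 2*j+5 by omega]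
        exact_mod_cast congrArg (Nat.cast : ℕ → ℝ) this
      -- now rewrite everything
      simp only [show j+2+1 = j+3 from rfl, show j+3-1 = j+2 from rfl,
        show j+2-1 = j+1 from rfl, show 2*(j+2)-1 = 2*j+3 by omega]
      rw [gbc_eq, gbc_eq, gbc_eq, gbc_eq, gbc_eq, gbc_eq]
      simp only [W, PA2, PB, PB2, PC, PD, PE, PF, fact2, e9]
      have e10' : ((2*(j+3)-1).choose (j+2) : ℝ)
          = 2*(2*(j:ℝ)+5) * ((2*j+3).choose (j+1) : ℝ) / ((j:ℝ)+3) := by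
        field_simp
        linarith [e10]
      rw [e10']
      rw [show (4:ℝ)^(j+2) = 4 * 4^(j+1) by ring]
      push_cast
      field_simp
      ring

theorem stmt1 (n : ℕ) (hn : 0 < n) (a : ℝ) (h : a + 1 + n ≠ 0) :
    (a + 2) ^ 2 * S (a + 2) n - (a + 1) ^ 2 * S a n =
      (a + 2) * (2 * a + 3) * n / (4 ^ (n - 1) * (a + 1 + n)) *
        (Nat.choose (2 * n - 1) (n - 1)) * gbc (a + 1) (n - 1) * gbc (-3 - a) (n - 1) := by
  match n, hn with
  | 1, _ =>
    rw [key a 1 one_pos]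
    have h2 : a + 2 ≠ 0 := by
      intro hc; apply h; push_cast; linarith
    norm_num [W, gbc, Finset.prod_range_zero]
    rw [eq_div_iff (by intro hc; exact h2 (by linarith))]
    ring
  | (j+2), _ =>
    rw [key a (j+2) (by omega)]
    have h' : a + 1 + ((j:ℝ)+2) ≠ 0 := by
      intro hc; apply h; push_cast; linarith
    have F0 : ((Nat.factorial (j+1) : ℝ)) ≠ 0 := by positivity
    have Q0 : ((4:ℝ)^(j+1)) ≠ 0 := by positivity
    have PD : P (-3 - a) (j+1) = P (-3 - a) j * (-3 - a - j) := P_succ _ j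
    simp only [show j+2-1 = j+1 from rfl, W, gbc_eq, PD]
    push_cast
    field_simp
    ring
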